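/- Let S be the additive submonoid of ℕ⁴ generated by u₁ = (1,1,0,1), u₂ = (1,0,1,1), u₃ = (0,1,1,1) and u₄ = (0,0,0,1), and let P be the set of all (a,b,c,m) ∈ ℕ⁴ such that a ≤ b+c, b ≤ a+c, c ≤ a+b and a+b+c ≤ 2m. Then P is the disjoint union of S and the translate (1,1,1,2)+S; equivalently, every point of P with a+b+c even lies in S, and every point of P with a+b+c odd is of the form (1,1,1,2)+s with s ∈ S. -/

import Mathlib

private def G : Set (ℕ × ℕ × ℕ × ℕ) := {(1,1,0,1), (1,0,1,1), (0,1,1,1), (0,0,0,1)}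

private lemma S_sub : ∀ x ∈ AddSubmonoid.closure G,
    x.1 ≤ x.2.1 + x.2.2.1 ∧ x.2.1 ≤ x.1 + x.2.2.1 ∧ x.2.2.1 ≤ x.1 + x.2.1 ∧
      x.1 + x.2.1 + x.2.2.1 ≤ 2 * x.2.2.2 ∧ (x.1 + x.2.1 + x.2.2.1) % 2 = 0 := by
  intro x hx
  induction hx using AddSubmonoid.closure_induction with
  | mem y hy =>
      rcases hy with h | h | h | h <;> subst h <;> simp
  | zero => simp
  | add y z _ _ hy hz =>
      obtain ⟨a,b,c,m⟩ := y; obtain ⟨a',b',c',m'⟩ := z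
      simp [Prod.ext_iff] at *
      omega

private lemma mem_S (a b c m : ℕ) (h1 : a ≤ b + c) (h2 : b ≤ a + c) (h3 : c ≤ a + b)
    (h4 : a + b + c ≤ 2 * m) (he : (a + b + c) % 2 = 0) :
    (a, b, c, m) ∈ AddSubmonoid.closure G := by
  obtain ⟨r, hr⟩ : ∃ r, a + b + c = 2 * r := ⟨(a+b+c)/2, by omega⟩
  have hk : (a, b, c, m) = (r - c) • ((1,1,0,1) : ℕ × ℕ × ℕ × ℕ)
      + (r - b) • (1,0,1,1) + (r - a) • (0,1,1,1) + (m - r) • (0,0,0,1) := by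
    simp [Prod.ext_iff, Prod.smul_def, smul_eq_mul]
    omega
  rw [hk]
  have g1 : ((1,1,0,1) : ℕ × ℕ × ℕ × ℕ) ∈ G := by left; rfl
  have g2 : ((1,0,1,1) : ℕ × ℕ × ℕ × ℕ) ∈ G := by right; left; rfl
  have g3 : ((0,1,1,1) : ℕ × ℕ × ℕ × ℕ) ∈ G := by right; right; left; rfl
  have g4 : ((0,0,0,1) : ℕ × ℕ × ℕ × ℕ) ∈ G := by right; right; right; rfl
  exact add_mem (add_mem (add_mem
    ((AddSubmonoid.closure G).nsmul_mem (AddSubmonoid.subset_closure g1) _)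
    ((AddSubmonoid.closure G).nsmul_mem (AddSubmonoid.subset_closure g2) _))
    ((AddSubmonoid.closure G).nsmul_mem (AddSubmonoid.subset_closure g3) _))
    ((AddSubmonoid.closure G).nsmul_mem (AddSubmonoid.subset_closure g4) _)

/-- `P` is the disjoint union of `S` and `(1,1,1,2) + S`, where `S` is the submonoid of `ℕ⁴`
generated by `u₁ = (1,1,0,1)`, `u₂ = (1,0,1,1)`, `u₃ = (0,1,1,1)`, `u₄ = (0,0,0,1)` and
`P = {(a,b,c,m) | a ≤ b + c, b ≤ a + c, c ≤ a + b, a + b + c ≤ 2m}`; moreover the points of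
`P` with `a + b + c` even lie in `S` and those with `a + b + c` odd lie in `(1,1,1,2) + S`. -/
theorem P_eq_disjoint_union_S_translate :
    letI S : Set (ℕ × ℕ × ℕ × ℕ) :=
      (AddSubmonoid.closure
        ({(1,1,0,1), (1,0,1,1), (0,1,1,1), (0,0,0,1)} : Set (ℕ × ℕ × ℕ × ℕ)) : Set _)
    letI P : Set (ℕ × ℕ × ℕ × ℕ) :=
      {x | x.1 ≤ x.2.1 + x.2.2.1 ∧ x.2.1 ≤ x.1 + x.2.2.1 ∧ x.2.2.1 ≤ x.1 + x.2.1 ∧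
        x.1 + x.2.1 + x.2.2.1 ≤ 2 * x.2.2.2}
    P = S ∪ (fun s => (1,1,1,2) + s) '' S ∧
      Disjoint S ((fun s => (1,1,1,2) + s) '' S) ∧
      (∀ x ∈ P, Even (x.1 + x.2.1 + x.2.2.1) → x ∈ S) ∧
      (∀ x ∈ P, Odd (x.1 + x.2.1 + x.2.2.1) → ∃ s ∈ S, x = (1,1,1,2) + s) := by
  have hG : ({(1,1,0,1), (1,0,1,1), (0,1,1,1), (0,0,0,1)} : Set (ℕ × ℕ × ℕ × ℕ)) = G := rfl
  rw [hG]
  -- even points of P are in S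
  have heS : ∀ x : ℕ × ℕ × ℕ × ℕ, x.1 ≤ x.2.1 + x.2.2.1 → x.2.1 ≤ x.1 + x.2.2.1 →
      x.2.2.1 ≤ x.1 + x.2.1 → x.1 + x.2.1 + x.2.2.1 ≤ 2 * x.2.2.2 →
      Even (x.1 + x.2.1 + x.2.2.1) → x ∈ AddSubmonoid.closure G := by
    rintro ⟨a,b,c,m⟩ h1 h2 h3 h4 he
    rw [Nat.even_iff] at he
    exact mem_S a b c m h1 h2 h3 h4 he
  -- odd points of P are in the translate
  have hoS : ∀ x : ℕ × ℕ × ℕ × ℕ, x.1 ≤ x.2.1 + x.2.2.1 → x.2.1 ≤ x.1 + x.2.2.1 →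
      x.2.2.1 ≤ x.1 + x.2.1 → x.1 + x.2.1 + x.2.2.1 ≤ 2 * x.2.2.2 →
      Odd (x.1 + x.2.1 + x.2.2.1) → ∃ s ∈ (AddSubmonoid.closure G : Set _),
        x = (1,1,1,2) + s := by
    rintro ⟨a,b,c,m⟩ h1 h2 h3 h4 ho
    rw [Nat.odd_iff] at ho
    simp only at h1 h2 h3 h4 ho
    refine ⟨(a-1, b-1, c-1, m-2), mem_S _ _ _ _ (by omega) (by omega) (by omega)
      (by omega) (by omega), ?_⟩
    simp only [Prod.ext_iff, Prod.mk_add_mk]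
    omega
  -- the translate is contained in P
  have htP : ∀ x ∈ (fun s => ((1:ℕ),(1:ℕ),(1:ℕ),(2:ℕ)) + s) ''
      (AddSubmonoid.closure G : Set _),
      x.1 ≤ x.2.1 + x.2.2.1 ∧ x.2.1 ≤ x.1 + x.2.2.1 ∧ x.2.2.1 ≤ x.1 + x.2.1 ∧
      x.1 + x.2.1 + x.2.2.1 ≤ 2 * x.2.2.2 := by
    rintro x ⟨s, hs, rfl⟩
    obtain ⟨a,b,c,m⟩ := s
    have := S_sub _ hs
    simp only [Prod.mk_add_mk] at *
    omega
  refine ⟨?_, ?_, fun x hx he => heS x hx.1 hx.2.1 hx.2.2.1 hx.2.2.2 he,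
    fun x hx ho => hoS x hx.1 hx.2.1 hx.2.2.1 hx.2.2.2 ho⟩
  · ext x
    constructor
    · rintro ⟨h1, h2, h3, h4⟩
      rcases Nat.even_or_odd (x.1 + x.2.1 + x.2.2.1) with he | ho
      · exact Or.inl (heS x h1 h2 h3 h4 he)
      · obtain ⟨s, hs, rfl⟩ := hoS x h1 h2 h3 h4 ho
        exact Or.inr ⟨s, hs, rfl⟩
    · rintro (hx | hx)
      · have := S_sub _ hx
        exact ⟨this.1, this.2.1, this.2.2.1, this.2.2.2.1⟩
      · exact htP x hx
  · rw [Set.disjoint_left]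
    rintro x hx ⟨s, hs, rfl⟩
    have h1 := S_sub _ hx
    have h2 := S_sub _ hs
    obtain ⟨a,b,c,m⟩ := s
    simp only [Prod.mk_add_mk] at h1 h2
    omega
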